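/- Let A ∈ ℝ^{5×5} be the SDIRK(5,4) Butcher matrix with rows (1/4, 0, 0, 0, 0), (1/2, 1/4, 0, 0, 0), (17/50, −1/25, 1/4, 0, 0), (371/1360, −137/2720, 15/544, 1/4, 0), (25/24, −49/48, 125/16, −85/12, 1/4), let b = (25/24, −49/48, 125/16, −85/12, 1/4)ᵀ, and let e = (1,1,1,1,1)ᵀ. Then the method is A-stable: for every z ∈ ℂ with Re z ≤ 0, |det(I − zA + z e bᵀ)| ≤ |det(I − zA)|. -/

import Mathlib

open Matrix

open Complex in
set_option maxHeartbeats 2000000 in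
private lemma sdirk_aux (x y : ℝ) (hx : x ≤ 0) :
    ‖(3072 - 768*(x + y*I) - 384*(x + y*I)^2 + 32*(x + y*I)^3 + 28*(x + y*I)^4 : ℂ)‖
    ≤ ‖(3072 - 3840*(x + y*I) + 1920*(x + y*I)^2 - 480*(x + y*I)^3 + 60*(x + y*I)^4 - 3*(x + y*I)^5 : ℂ)‖ := by
  rw [Complex.norm_def, Complex.norm_def]
  apply Real.sqrt_le_sqrt
  simp only [Complex.normSq_apply, Complex.add_re, Complex.add_im, Complex.sub_re,
    Complex.sub_im, Complex.mul_re, Complex.mul_im, Complex.I_re, Complex.I_im,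
    Complex.ofReal_re, Complex.ofReal_im, Complex.re_ofNat, Complex.im_ofNat,
    pow_succ, pow_zero, one_mul]
  ring_nf
  nlinarith [sq_nonneg (y^3*(9*y^2-32)), sq_nonneg (y^3), sq_nonneg (y^5), mul_nonneg (pow_nonneg (neg_nonneg.mpr hx) 1) (pow_nonneg (sq_nonneg y) 0), mul_nonneg (pow_nonneg (neg_nonneg.mpr hx) 1) (pow_nonneg (sq_nonneg y) 1), mul_nonneg (pow_nonneg (neg_nonneg.mpr hx) 1) (pow_nonneg (sq_nonneg y) 2), mul_nonneg (pow_nonneg (neg_nonneg.mpr hx) 1) (pow_nonneg (sq_nonneg y) 3), mul_nonneg (pow_nonneg (neg_nonneg.mpr hx) 1) (pow_nonneg (sq_nonneg y) 4), mul_nonneg (pow_nonneg (neg_nonneg.mpr hx) 2) (pow_nonneg (sq_nonneg y) 0), mul_nonneg (pow_nonneg (neg_nonneg.mpr hx) 2) (pow_nonneg (sq_nonneg y) 1), mul_nonneg (pow_nonneg (neg_nonneg.mpr hx) 2) (pow_nonneg (sq_nonneg y) 2), mul_nonneg (pow_nonneg (neg_nonneg.mpr hx) 2) (pow_nonneg (sq_nonneg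 y) 3), mul_nonneg (pow_nonneg (neg_nonneg.mpr hx) 2) (pow_nonneg (sq_nonneg y) 4), mul_nonneg (pow_nonneg (neg_nonneg.mpr hx) 3) (pow_nonneg (sq_nonneg y) 0), mul_nonneg (pow_nonneg (neg_nonneg.mpr hx) 3) (pow_nonneg (sq_nonneg y) 1), mul_nonneg (pow_nonneg (neg_nonneg.mpr hx) 3) (pow_nonneg (sq_nonneg y) 2), mul_nonneg (pow_nonneg (neg_nonneg.mpr hx) 3) (pow_nonneg (sq_nonneg y) 3), mul_nonneg (pow_nonneg (neg_nonneg.mpr hx) 4) (pow_nonneg (sq_nonneg y) 0), mul_nonneg (pow_nonneg (neg_nonneg.mpr hx) 4) (pow_nonneg (sq_nonneg y) 1), mul_nonneg (pow_nonneg (neg_nonneg.mpr hx) 4) (pow_nonneg (sq_nonneg y) 2), mul_nonneg (pow_nonneg (neg_nonneg.mpr hx) 4) (pow_nonneg (sq_nonneg y) 3), mul_nonneg (pow_nonneg (neg_nonneg.mpr hx) 5) (pow_nonneg (sq_nonneg y) 0), mul_nonneg (pow_nonneg (neg_nonneg.mpr hx) 5) (pow_nonneg (sq_nonneg y) 1),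 mul_nonneg (pow_nonneg (neg_nonneg.mpr hx) 5) (pow_nonneg (sq_nonneg y) 2), mul_nonneg (pow_nonneg (neg_nonneg.mpr hx) 6) (pow_nonneg (sq_nonneg y) 0), mul_nonneg (pow_nonneg (neg_nonneg.mpr hx) 6) (pow_nonneg (sq_nonneg y) 1), mul_nonneg (pow_nonneg (neg_nonneg.mpr hx) 6) (pow_nonneg (sq_nonneg y) 2), mul_nonneg (pow_nonneg (neg_nonneg.mpr hx) 7) (pow_nonneg (sq_nonneg y) 0), mul_nonneg (pow_nonneg (neg_nonneg.mpr hx) 7) (pow_nonneg (sq_nonneg y) 1), mul_nonneg (pow_nonneg (neg_nonneg.mpr hx) 8) (pow_nonneg (sq_nonneg y) 0), mul_nonneg (pow_nonneg (neg_nonneg.mpr hx) 8) (pow_nonneg (sq_nonneg y) 1), mul_nonneg (pow_nonneg (neg_nonneg.mpr hx) 9) (pow_nonneg (sq_nonneg y) 0), mul_nonneg (pow_nonneg (neg_nonneg.mpr hx) 10) (pow_nonneg (sq_nonneg y) 0)]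

set_option maxHeartbeats 4000000 in
/-- **A-stability of SDIRK(5,4):** `|det(I − zA + z e bᵀ)| ≤ |det(I − zA)|` for all
`z` in the closed left half-plane. -/
theorem sdirk54_A_stable
    (A : Matrix (Fin 5) (Fin 5) ℝ)
    (hA : A = !![1/4, 0, 0, 0, 0;
                 1/2, 1/4, 0, 0, 0;
                 17/50, -1/25, 1/4, 0, 0;
                 371/1360, -137/2720, 15/544, 1/4, 0;
                 25/24, -49/48, 125/16, -85/12, 1/4])
    (b : Fin 5 → ℝ) (hb : b = ![25/24, -49/48, 125/16, -85/12, 1/4])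
    (e : Fin 5 → ℝ) (he : e = ![1, 1, 1, 1, 1]) :
    ∀ z : ℂ, z.re ≤ 0 →
      ‖(1 - z • A.map Complex.ofReal + z • (vecMulVec e b).map Complex.ofReal).det‖ ≤
        ‖(1 - z • A.map Complex.ofReal).det‖ := by
  subst hA hb he
  intro z hz
  have fcs1 : (Fin.castSucc (2 : Fin 4)) = (2 : Fin 5) := rfl
  have fcs2 : ((Fin.succ (2 : Fin 3)).castSucc) = (3 : Fin 5) := rfl
  have fcs3 : ((Fin.castSucc (2 : Fin 3)).castSucc) = (2 : Fin 5) := rfl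
  have fcs4 : (Fin.castSucc (2 : Fin 3)) = (2 : Fin 4) := rfl
  have fcs5 : (Fin.succ (2 : Fin 3)) = (3 : Fin 4) := rfl
  have fcs6 : (Fin.succ (2 : Fin 4)) = (3 : Fin 5) := rfl
  have fcs7 : (Fin.castSucc (3 : Fin 4)) = (3 : Fin 5) := rfl
  have fcs8 : (Fin.succ (3 : Fin 4)) = (4 : Fin 5) := rfl
  have hD : (1 - z • (!![1/4, 0, 0, 0, 0;
                 1/2, 1/4, 0, 0, 0;
                 17/50, -1/25, 1/4, 0, 0;
                 371/1360, -137/2720, 15/544, 1/4, 0;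
                 25/24, -49/48, 125/16, -85/12, 1/4] : Matrix (Fin 5) (Fin 5) ℝ).map Complex.ofReal).det
      = (1024 - 1280*z + 640*z^2 - 160*z^3 + 20*z^4 - z^5)/1024 := by
    have h : (1 - z • (!![1/4, 0, 0, 0, 0;
                 1/2, 1/4, 0, 0, 0;
                 17/50, -1/25, 1/4, 0, 0;
                 371/1360, -137/2720, 15/544, 1/4, 0;
                 25/24, -49/48, 125/16, -85/12, 1/4] : Matrix (Fin 5) (Fin 5) ℝ).map Complex.ofReal)
        = !![1 - z*(1/4), 0, 0, 0, 0;
             -(z*(1/2)), 1 - z*(1/4), 0, 0, 0;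
             -(z*(17/50)), z*(1/25), 1 - z*(1/4), 0, 0;
             -(z*(371/1360)), z*(137/2720), -(z*(15/544)), 1 - z*(1/4), 0;
             -(z*(25/24)), z*(49/48), -(z*(125/16)), z*(85/12), 1 - z*(1/4)] := by
      ext i j
      fin_cases i <;> fin_cases j <;>
        simp [Matrix.one_apply] <;> norm_num
    rw [h]
    simp (config := { decide := true }) [Matrix.det_succ_row_zero, Fin.sum_univ_succ,
      Fin.succAbove, Matrix.submatrix_apply,
      Matrix.cons_val', Matrix.cons_val_zero, Matrix.cons_val_one, Matrix.head_cons,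
      Matrix.cons_val_succ, Matrix.cons_val_two, Matrix.cons_val_three, Matrix.cons_val_four,
      Matrix.vecTail, Matrix.vecHead, fcs1, fcs2, fcs3, fcs4, fcs5, fcs6, fcs7, fcs8, - Fin.val_fin_lt]
    ring
  have hN : (1 - z • (!![1/4, 0, 0, 0, 0;
                 1/2, 1/4, 0, 0, 0;
                 17/50, -1/25, 1/4, 0, 0;
                 371/1360, -137/2720, 15/544, 1/4, 0;
                 25/24, -49/48, 125/16, -85/12, 1/4] : Matrix (Fin 5) (Fin 5) ℝ).map Complex.ofReal
       + z • (vecMulVec ![1,1,1,1,1] ![25/24, -49/48, 125/16, -85/12, (1:ℝ)/4]).map Complex.ofReal).det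
      = (3072 - 768*z - 384*z^2 + 32*z^3 + 28*z^4)/3072 := by
    have h : (1 - z • (!![1/4, 0, 0, 0, 0;
                 1/2, 1/4, 0, 0, 0;
                 17/50, -1/25, 1/4, 0, 0;
                 371/1360, -137/2720, 15/544, 1/4, 0;
                 25/24, -49/48, 125/16, -85/12, 1/4] : Matrix (Fin 5) (Fin 5) ℝ).map Complex.ofReal
       + z • (vecMulVec ![1,1,1,1,1] ![25/24, -49/48, 125/16, -85/12, (1:ℝ)/4]).map Complex.ofReal)
        = !![1 + z*(19/24), -(z*(49/48)), z*(125/16), -(z*(85/12)), z*(1/4);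
             z*(13/24), 1 - z*(61/48), z*(125/16), -(z*(85/12)), z*(1/4);
             z*(421/600), -(z*(1177/1200)), 1 + z*(121/16), -(z*(85/12)), z*(1/4);
             z*(3137/4080), -(z*(7919/8160)), z*(4235/544), 1 - z*(22/3), z*(1/4);
             0, 0, 0, 0, 1] := by
      ext i j
      fin_cases i <;> fin_cases j <;>
        simp [Matrix.one_apply, Matrix.vecMulVec_apply] <;> ring_nf <;> norm_num <;> ring
    rw [h]
    simp (config := { decide := true }) [Matrix.det_succ_row_zero, Fin.sum_univ_succ,
      Fin.succAbove, Matrix.submatrix_apply,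
      Matrix.cons_val', Matrix.cons_val_zero, Matrix.cons_val_one, Matrix.head_cons,
      Matrix.cons_val_succ, Matrix.cons_val_two, Matrix.cons_val_three, Matrix.cons_val_four,
      Matrix.vecTail, Matrix.vecHead, fcs1, fcs2, fcs3, fcs4, fcs5, fcs6, fcs7, fcs8, - Fin.val_fin_lt]
    ring
  rw [hN, hD, norm_div, norm_div]
  have e1 : ‖(3072:ℂ)‖ = 3072 := by
    rw [show (3072:ℂ) = ((3072:ℝ):ℂ) by norm_num, Complex.norm_real]; norm_num
  have e2 : ‖(1024:ℂ)‖ = 1024 := by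
    rw [show (1024:ℂ) = ((1024:ℝ):ℂ) by norm_num, Complex.norm_real]; norm_num
  rw [e1, e2, div_le_div_iff₀ (by norm_num) (by norm_num)]
  have key := sdirk_aux z.re z.im hz
  rw [Complex.re_add_im] at key
  have h3 : ‖(3072 - 3840*z + 1920*z^2 - 480*z^3 + 60*z^4 - 3*z^5)‖
      = 3 * ‖(1024 - 1280*z + 640*z^2 - 160*z^3 + 20*z^4 - z^5)‖ := by
    rw [show (3072 - 3840*z + 1920*z^2 - 480*z^3 + 60*z^4 - 3*z^5)
        = 3*(1024 - 1280*z + 640*z^2 - 160*z^3 + 20*z^4 - z^5) by ring, norm_mul]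
    norm_num [show ‖(3:ℂ)‖ = 3 by rw [show (3:ℂ) = ((3:ℝ):ℂ) by norm_num, Complex.norm_real]; norm_num]
  rw [h3] at key
  linarith
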